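/- Let H be an m×n binary parity-check matrix whose first m−1 rows each have weight 2, let ~ be the equivalence relation on columns generated by these weight-2 rows, and suppose the support I_m of the last row intersects each equivalence class in at most one element. Then for every nonzero x in the fundamental cone K(H), the max-fractional weight w_maxfrac(x) is at least the minimum Hamming distance of the code with parity-check matrix H. -/

import Mathlib

/-- The fundamental cone of a binary matrix `H` (entries in `GF(2)`),
    viewed via its support: `x ∈ K(H)` iff all coordinates are nonnegative and
    for every row `j` and every `ℓ` in the support of row `j`,
    `x ℓ ≤ ∑_{i ∈ supp(row j), i ≠ ℓ} x i`. -/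
def fundCone {ι κ : Type*} [Fintype ι] [Fintype κ] [DecidableEq κ]
    (H : Matrix ι κ (ZMod 2)) : Set (κ → ℝ) :=
  {x | (∀ i, 0 ≤ x i) ∧
    ∀ j, ∀ ℓ, H j ℓ = 1 →
      x ℓ ≤ ∑ i ∈ Finset.univ.filter (fun i => H j i = 1 ∧ i ≠ ℓ), x i}

/-- Max-fractional weight: (sum of coordinates)/(max coordinate). -/
noncomputable def wMaxfrac {κ : Type*} [Fintype κ] (x : κ → ℝ) : ℝ :=
  (∑ i, x i) / (⨆ i, x i)

/-- AWGNC pseudoweight. -/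
noncomputable def wAWGNC {κ : Type*} [Fintype κ] (x : κ → ℝ) : ℝ :=
  (∑ i, x i) ^ 2 / (∑ i, (x i) ^ 2)

/-- BEC pseudoweight: size of the support. -/
noncomputable def wBEC {κ : Type*} (x : κ → ℝ) : ℕ :=
  Set.ncard {i | x i ≠ 0}

/-- Hamming weight of a vector over GF(2). -/
def hammingWt {κ : Type*} [Fintype κ] (c : κ → ZMod 2) : ℕ :=
  (Finset.univ.filter (fun i => c i ≠ 0)).card


open Finset

def rowRel {m n : ℕ} (H : Matrix (Fin m) (Fin n) (ZMod 2)) (a b : Fin n) : Prop :=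
  ∃ j : Fin m, (j : ℕ) < m - 1 ∧ {k | H j k = 1} = ({a, b} : Set (Fin n))

lemma zmod2_cases (a : ZMod 2) : a = 0 ∨ a = 1 := by fin_cases a <;> [exact Or.inl rfl; exact Or.inr rfl]

lemma sum_mulVec_indicator {m n : ℕ} (H : Matrix (Fin m) (Fin n) (ZMod 2))
    (S : Finset (Fin n)) (j : Fin m) :
    (H.mulVec (fun i => if i ∈ S then 1 else 0)) j
      = ((univ.filter (fun i => H j i = 1 ∧ i ∈ S)).card : ZMod 2) := by
  rw [← Finset.sum_boole]
  simp only [Matrix.mulVec, dotProduct]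
  apply Finset.sum_congr rfl
  intro i _
  rcases zmod2_cases (H j i) with h | h <;> by_cases hi : i ∈ S <;>
    simp [h, hi]

lemma indicator_mem_code {m n : ℕ} (hm : 0 < m) {H : Matrix (Fin m) (Fin n) (ZMod 2)}
    (h2 : ∀ j : Fin m, (j : ℕ) < m - 1 →
      (Finset.univ.filter (fun i => H j i = 1)).card = 2)
    (S : Finset (Fin n))
    (hclosed : ∀ a b, Relation.EqvGen (rowRel H) a b → (a ∈ S ↔ b ∈ S))
    (heven : 2 ∣ (univ.filter
      (fun i => H ⟨m - 1, Nat.sub_lt hm one_pos⟩ i = 1 ∧ i ∈ S)).card) :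
    H.mulVec (fun i => if i ∈ S then 1 else 0) = 0 := by
  funext j
  rw [show (0 : Fin m → ZMod 2) j = 0 from rfl, sum_mulVec_indicator,
    ZMod.natCast_eq_zero_iff]
  by_cases hj : (j : ℕ) < m - 1
  · obtain ⟨a, b, hab, hab2⟩ := Finset.card_eq_two.mp (h2 j hj)
    have hrel : rowRel H a b := by
      refine ⟨j, hj, ?_⟩
      ext k
      have : k ∈ univ.filter (fun i => H j i = 1) ↔ k ∈ ({a, b} : Finset (Fin n)) := by
        rw [hab2]
      simpa using this
    have hiff := hclosed a b (Relation.EqvGen.rel _ _ hrel)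
    have : univ.filter (fun i => H j i = 1 ∧ i ∈ S)
        = ({a, b} : Finset (Fin n)).filter (fun i => i ∈ S) := by
      rw [← hab2, Finset.filter_filter]
    rw [this]
    by_cases haS : a ∈ S
    · have : ({a, b} : Finset (Fin n)).filter (fun i => i ∈ S) = {a, b} := by
        rw [Finset.filter_eq_self]
        intro i hi
        rcases Finset.mem_insert.mp hi with rfl | hi
        · exact haS
        · rw [Finset.mem_singleton] at hi; subst hi; exact hiff.mp haS
      rw [this, Finset.card_insert_of_notMem (by simpa using hab), Finset.card_singleton]
    · have : ({a, b} : Finset (Fin n)).filter (fun i => i ∈ S) = ∅ := by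
        rw [Finset.filter_eq_empty_iff]
        intro i hi
        rcases Finset.mem_insert.mp hi with rfl | hi
        · exact haS
        · rw [Finset.mem_singleton] at hi; subst hi
          exact fun h => haS (hiff.mpr h)
      rw [this, Finset.card_empty]
      exact dvd_zero 2
  · have hj' : j = ⟨m - 1, Nat.sub_lt hm one_pos⟩ := by
      apply Fin.ext
      show (j : ℕ) = m - 1
      have := j.2
      omega
    rw [hj']
    exact heven


lemma rowRel_eq {m n : ℕ} {H : Matrix (Fin m) (Fin n) (ZMod 2)} {x : Fin n → ℝ}
    (hx : x ∈ fundCone H) {a b : Fin n} (hab : rowRel H a b) : x a = x b := by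
  classical
  obtain ⟨j, _, hsupp⟩ := hab
  by_cases hab' : a = b
  · rw [hab']
  · have ha : H j a = 1 := by
      have : a ∈ ({a, b} : Set (Fin n)) := by left; rfl
      rw [← hsupp] at this; exact this
    have hb : H j b = 1 := by
      have : b ∈ ({a, b} : Set (Fin n)) := by right; rfl
      rw [← hsupp] at this; exact this
    have key : ∀ u v : Fin n, u ≠ v → H j u = 1 → H j v = 1 →
        univ.filter (fun i => H j i = 1 ∧ i ≠ u) = {v} := by
      intro u v huv hu hv
      ext i
      simp only [mem_filter, mem_univ, true_and, mem_singleton]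
      constructor
      · rintro ⟨hi, hiu⟩
        have : i ∈ ({a, b} : Set (Fin n)) := by rw [← hsupp]; exact hi
        have hu' : u ∈ ({a, b} : Set (Fin n)) := by rw [← hsupp]; exact hu
        have hv' : v ∈ ({a, b} : Set (Fin n)) := by rw [← hsupp]; exact hv
        simp only [Set.mem_insert_iff, Set.mem_singleton_iff] at this hu' hv'
        rcases this with rfl | rfl <;> rcases hu' with rfl | rfl <;>
          rcases hv' with rfl | rfl <;> tauto
      · rintro rfl
        exact ⟨hv, fun h => huv h.symm⟩
    have h1 := hx.2 j a ha
    have h2 := hx.2 j b hb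
    rw [key a b hab' ha hb, Finset.sum_singleton] at h1
    rw [key b a (Ne.symm hab') hb ha, Finset.sum_singleton] at h2
    exact le_antisymm h1 h2

lemma eqvGen_eq {m n : ℕ} {H : Matrix (Fin m) (Fin n) (ZMod 2)} {x : Fin n → ℝ}
    (hx : x ∈ fundCone H) {a b : Fin n}
    (hab : Relation.EqvGen (rowRel H) a b) : x a = x b := by
  induction hab with
  | rel a b h => exact rowRel_eq hx h
  | refl a => rfl
  | symm a b _ ih => exact ih.symm
  | trans a b c _ _ ih1 ih2 => exact ih1.trans ih2


/-- If the first m-1 rows of H have weight 2 and the support of the last row meets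
    each equivalence class (of the relation generated by the weight-2 rows) in at
    most one element, then every nonzero pseudocodeword has max-fractional weight
    at least the minimum distance of the code. -/
theorem pseudoweight_weight_two_plus_one_row {m n : ℕ} (hm : 0 < m) (d : ℕ)
    (H : Matrix (Fin m) (Fin n) (ZMod 2))
    (h2 : ∀ j : Fin m, (j : ℕ) < m - 1 →
      (Finset.univ.filter (fun i => H j i = 1)).card = 2)
    (hlast : ∀ i i' : Fin n,
      H ⟨m - 1, Nat.sub_lt hm one_pos⟩ i = 1 →
      H ⟨m - 1, Nat.sub_lt hm one_pos⟩ i' = 1 →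
      Relation.EqvGen (fun a b => ∃ j : Fin m, (j : ℕ) < m - 1 ∧
        {k | H j k = 1} = ({a, b} : Set (Fin n))) i i' →
      i = i')
    (hd_min : ∀ c : Fin n → ZMod 2, H.mulVec c = 0 → c ≠ 0 → d ≤ hammingWt c)
    (hd_ex : ∃ c : Fin n → ZMod 2, H.mulVec c = 0 ∧ c ≠ 0 ∧ hammingWt c = d) :
    ∀ x ∈ fundCone H, x ≠ 0 → (d : ℝ) ≤ wMaxfrac x := by
  classical
  intro x hx hxne
  have hx0 : ∀ i, 0 ≤ x i := hx.1
  obtain ⟨i1, hi1⟩ : ∃ i, x i ≠ 0 := by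
    by_contra h; push_neg at h; exact hxne (funext h)
  haveI : Nonempty (Fin n) := ⟨i1⟩
  obtain ⟨i0, -, hi0max⟩ :=
    Finset.exists_max_image (Finset.univ : Finset (Fin n)) x ⟨i1, Finset.mem_univ i1⟩
  set M := x i0 with hMdef
  have hM : 0 < M :=
    lt_of_lt_of_le (lt_of_le_of_ne (hx0 i1) (Ne.symm hi1)) (hi0max i1 (Finset.mem_univ i1))
  have hsup : (⨆ i, x i) = M := by
    apply le_antisymm
    · exact ciSup_le fun i => hi0max i (Finset.mem_univ i)
    · exact le_ciSup (Set.Finite.bddAbove (Set.finite_range x)) i0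
  rw [wMaxfrac, hsup, le_div_iff₀ hM]
  -- classes
  set R := Relation.EqvGen (rowRel H) with hRdef
  have hRequiv : Equivalence R := Relation.EqvGen.is_equivalence _
  set C : Fin n → Finset (Fin n) := fun a => Finset.univ.filter (fun b => R a b) with hCdef
  have hmemC : ∀ a b : Fin n, b ∈ C a ↔ R a b := by
    intro a b; simp [hCdef]
  have hselfC : ∀ a : Fin n, a ∈ C a := fun a => (hmemC a a).mpr (hRequiv.refl a)
  have hconstC : ∀ a : Fin n, ∀ i ∈ C a, x i = x a :=
    fun a i hi => (eqvGen_eq hx ((hmemC a i).mp hi)).symm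
  have hsumC : ∀ a : Fin n, ∑ i ∈ C a, x i = ((C a).card : ℝ) * x a := by
    intro a
    rw [Finset.sum_congr rfl (hconstC a), Finset.sum_const, nsmul_eq_mul]
  have hclosedC : ∀ a u v : Fin n, R u v → (u ∈ C a ↔ v ∈ C a) := by
    intro a u v huv
    rw [hmemC, hmemC]
    exact ⟨fun h => hRequiv.trans h huv, fun h => hRequiv.trans h (hRequiv.symm huv)⟩
  set J : Fin m := ⟨m - 1, Nat.sub_lt hm one_pos⟩ with hJdef
  by_cases hcase : ∃ ℓ, H J ℓ = 1 ∧ R i0 ℓ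
  · -- the class of the max meets the last row's support
    obtain ⟨ℓ0, hℓ0, hrel0⟩ := hcase
    have hxℓ0 : x ℓ0 = M := (eqvGen_eq hx hrel0).symm
    set T : Finset (Fin n) := Finset.univ.filter (fun i => H J i = 1 ∧ i ≠ ℓ0) with hTdef
    have hcon : M ≤ ∑ i ∈ T, x i := hxℓ0 ▸ hx.2 J ℓ0 hℓ0
    set T' : Finset (Fin n) := T.filter (fun ℓ => 0 < x ℓ) with hT'def
    have hT'ne : T'.Nonempty := by
      by_contra h
      rw [Finset.not_nonempty_iff_eq_empty] at h
      have : ∑ i ∈ T, x i ≤ 0 := by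
        apply Finset.sum_nonpos
        intro i hi
        by_contra h'
        push_neg at h'
        have : i ∈ T' := Finset.mem_filter.mpr ⟨hi, h'⟩
        rw [h] at this
        exact absurd this (Finset.notMem_empty i)
      linarith
    obtain ⟨ℓ1, hℓ1T', hℓ1min⟩ := Finset.exists_min_image T' (fun ℓ => (C ℓ).card) hT'ne
    have hℓ1T : ℓ1 ∈ T := (Finset.mem_filter.mp hℓ1T').1
    have hℓ1 : H J ℓ1 = 1 := (Finset.mem_filter.mp hℓ1T).2.1
    have hℓ1ne : ℓ1 ≠ ℓ0 := (Finset.mem_filter.mp hℓ1T).2.2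
    -- classes of distinct last-row support elements are disjoint
    have hdisj : ∀ u v : Fin n, H J u = 1 → H J v = 1 → u ≠ v → Disjoint (C u) (C v) := by
      intro u v hu hv huv
      rw [Finset.disjoint_left]
      intro i hiu hiv
      exact huv (hlast u v hu hv (hRequiv.trans ((hmemC u i).mp hiu)
        (hRequiv.symm ((hmemC v i).mp hiv))))
    set S : Finset (Fin n) := C ℓ0 ∪ C ℓ1 with hSdef
    set c : Fin n → ZMod 2 := fun i => if i ∈ S then 1 else 0 with hcdef
    have hfilter : Finset.univ.filter (fun i => H J i = 1 ∧ i ∈ S)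
        = ({ℓ0, ℓ1} : Finset (Fin n)) := by
      ext i
      simp only [Finset.mem_filter, Finset.mem_univ, true_and, Finset.mem_insert,
        Finset.mem_singleton, hSdef, Finset.mem_union]
      constructor
      · rintro ⟨hi, hi' | hi'⟩
        · exact Or.inl (hlast ℓ0 i hℓ0 hi ((hmemC ℓ0 i).mp hi')).symm
        · exact Or.inr (hlast ℓ1 i hℓ1 hi ((hmemC ℓ1 i).mp hi')).symm
      · rintro (h | h)
        · rw [h]; exact ⟨hℓ0, Or.inl (hselfC ℓ0)⟩
        · rw [h]; exact ⟨hℓ1, Or.inr (hselfC ℓ1)⟩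
    have hcode : H.mulVec c = 0 := by
      apply indicator_mem_code hm h2 S
      · intro a b hab
        simp only [hSdef, Finset.mem_union]
        rw [hclosedC ℓ0 a b hab, hclosedC ℓ1 a b hab]
      · rw [show (⟨m - 1, Nat.sub_lt hm one_pos⟩ : Fin m) = J from rfl, hfilter]
        rw [Finset.card_insert_of_notMem (by simpa using hℓ1ne.symm), Finset.card_singleton]
    have hcne : c ≠ 0 := by
      intro h
      have := congrFun h ℓ0
      simp only [hcdef, Pi.zero_apply] at this
      rw [if_pos (Finset.mem_union_left _ (hselfC ℓ0))] at this
      exact one_ne_zero this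
    have hwt : hammingWt c = (C ℓ0).card + (C ℓ1).card := by
      have hSc : Finset.univ.filter (fun i => c i ≠ 0) = S := by
        ext i
        simp only [Finset.mem_filter, Finset.mem_univ, true_and, hcdef]
        by_cases hi : i ∈ S <;> simp [hi]
      rw [hammingWt, hSc, hSdef, Finset.card_union_of_disjoint (hdisj ℓ0 ℓ1 hℓ0 hℓ1 hℓ1ne.symm)]
    have hd : d ≤ (C ℓ0).card + (C ℓ1).card := hwt ▸ hd_min c hcode hcne
    -- sum lower bound
    set B : Finset (Fin n) := Finset.univ.filter (fun i => H J i = 1) with hBdef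
    have hTB : T = B.erase ℓ0 := by
      ext i
      simp only [hTdef, hBdef, Finset.mem_filter, Finset.mem_univ, true_and,
        Finset.mem_erase]
      tauto
    have hℓ0B : ℓ0 ∈ B := Finset.mem_filter.mpr ⟨Finset.mem_univ ℓ0, hℓ0⟩
    have hpair : (B : Set (Fin n)).PairwiseDisjoint C := by
      intro u hu v hv huv
      simp only [hBdef, Finset.coe_filter, Set.mem_setOf_eq] at hu hv
      exact hdisj u v hu.2 hv.2 huv
    have hbiUnion : ∑ ℓ ∈ B, ∑ i ∈ C ℓ, x i ≤ ∑ i, x i := by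
      rw [← Finset.sum_biUnion hpair]
      exact Finset.sum_le_sum_of_subset_of_nonneg (Finset.subset_univ _)
        (fun i _ _ => hx0 i)
    have hsplit : ∑ ℓ ∈ B, ∑ i ∈ C ℓ, x i
        = ∑ i ∈ C ℓ0, x i + ∑ ℓ ∈ T, ∑ i ∈ C ℓ, x i := by
      rw [hTB]
      exact (Finset.add_sum_erase B (fun ℓ => ∑ i ∈ C ℓ, x i) hℓ0B).symm
    have hTbound : ((C ℓ1).card : ℝ) * M ≤ ∑ ℓ ∈ T, ∑ i ∈ C ℓ, x i := by
      calc ((C ℓ1).card : ℝ) * M ≤ ((C ℓ1).card : ℝ) * ∑ i ∈ T, x i := by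
            apply mul_le_mul_of_nonneg_left hcon (Nat.cast_nonneg _)
        _ = ∑ ℓ ∈ T, ((C ℓ1).card : ℝ) * x ℓ := by rw [Finset.mul_sum]
        _ ≤ ∑ ℓ ∈ T, ∑ i ∈ C ℓ, x i := by
            apply Finset.sum_le_sum
            intro ℓ hℓ
            rw [hsumC ℓ]
            rcases lt_or_eq_of_le (hx0 ℓ) with hpos | hzero
            · have hℓT' : ℓ ∈ T' := Finset.mem_filter.mpr ⟨hℓ, hpos⟩
              exact mul_le_mul_of_nonneg_right
                (Nat.cast_le.mpr (hℓ1min ℓ hℓT')) (le_of_lt hpos)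
            · rw [← hzero, mul_zero, mul_zero]
    have hfinal : ((C ℓ0).card + (C ℓ1).card : ℝ) * M ≤ ∑ i, x i := by
      have h0 : ∑ i ∈ C ℓ0, x i = ((C ℓ0).card : ℝ) * M := by
        rw [hsumC ℓ0, hxℓ0]
      calc ((C ℓ0).card + (C ℓ1).card : ℝ) * M
          = ((C ℓ0).card : ℝ) * M + ((C ℓ1).card : ℝ) * M := by ring
        _ ≤ ∑ i ∈ C ℓ0, x i + ∑ ℓ ∈ T, ∑ i ∈ C ℓ, x i := by
            rw [h0]; exact add_le_add le_rfl hTbound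
        _ = ∑ ℓ ∈ B, ∑ i ∈ C ℓ, x i := hsplit.symm
        _ ≤ ∑ i, x i := hbiUnion
    calc (d : ℝ) * M ≤ ((C ℓ0).card + (C ℓ1).card : ℝ) * M := by
          apply mul_le_mul_of_nonneg_right _ hM.le
          exact_mod_cast hd
      _ ≤ ∑ i, x i := hfinal
  · -- the class of the max avoids the last row's support
    set S : Finset (Fin n) := C i0 with hSdef
    set c : Fin n → ZMod 2 := fun i => if i ∈ S then 1 else 0 with hcdef
    have hcode : H.mulVec c = 0 := by
      apply indicator_mem_code hm h2 S
      · intro a b hab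
        exact hclosedC i0 a b hab
      · have : Finset.univ.filter
            (fun i => H (⟨m - 1, Nat.sub_lt hm one_pos⟩ : Fin m) i = 1 ∧ i ∈ S) = ∅ := by
          rw [Finset.filter_eq_empty_iff]
          intro i _
          rintro ⟨hi1', hi2⟩
          exact hcase ⟨i, hi1', (hmemC i0 i).mp hi2⟩
        rw [this, Finset.card_empty]
        exact dvd_zero 2
    have hcne : c ≠ 0 := by
      intro h
      have := congrFun h i0
      simp only [hcdef, Pi.zero_apply] at this
      rw [if_pos (hselfC i0)] at this
      exact one_ne_zero this
    have hwt : hammingWt c = S.card := by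
      have hSc : Finset.univ.filter (fun i => c i ≠ 0) = S := by
        ext i
        simp only [Finset.mem_filter, Finset.mem_univ, true_and, hcdef]
        by_cases hi : i ∈ S <;> simp [hi]
      rw [hammingWt, hSc]
    have hd : d ≤ S.card := hwt ▸ hd_min c hcode hcne
    calc (d : ℝ) * M ≤ (S.card : ℝ) * M := by
          apply mul_le_mul_of_nonneg_right _ hM.le
          exact_mod_cast hd
      _ = ∑ i ∈ S, x i := by rw [hsumC i0, hMdef]
      _ ≤ ∑ i, x i := Finset.sum_le_sum_of_subset_of_nonneg (Finset.subset_univ _)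
          (fun i _ _ => hx0 i)
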